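/- Let (Ω, P, θ) be ergodic, T the skew product T(ω,x) = (θω, T_ω x), and μ a T-invariant probability measure with disintegration {μ_ω}. Suppose there is exponential decay of correlations: for all f ∈ BV_Ω(I) and g ∈ L¹(μ), |μ_ω(f_ω · (g_{θⁿω} ∘ T_ω^n)) − μ_ω(f_ω)·μ_{θⁿω}(g_{θⁿω})| ≤ D(ω)·‖f_ω‖_BV·‖g_{θⁿω}‖_{L¹}·κⁿ for κ ∈ (0,1) and finite measurable D. Then every T-invariant measurable set A ⊆ Ω × I satisfies μ(A) ∈ {0, 1}; i.e., μ is ergodic. -/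

import Mathlib

open MeasureTheory Filter
open scoped ENNReal

/-- Fiberwise iterates of a skew product: `T_ω^0 = id`, `T_ω^{n+1} = T_{θω}^n ∘ T_ω`. -/
def iterT {Ω : Type*} (θ : Ω → Ω) (T : Ω → ℝ → ℝ) : ℕ → Ω → ℝ → ℝ
  | 0, _ => id
  | n + 1, ω => iterT θ T n (θ ω) ∘ T ω

/-- The `BV` norm `‖f‖_BV = ‖f‖_∞ + Var(f)` on the interval `[a,b]`. -/
noncomputable def bvNorm (a b : ℝ) (f : ℝ → ℝ) : ℝ :=
  (⨆ x : Set.Icc a b, |f x.1|) + (eVariationOn f (Set.Icc a b)).toReal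

lemma bvNorm_nonneg (a b : ℝ) (f : ℝ → ℝ) : 0 ≤ bvNorm a b f :=
  add_nonneg (Real.iSup_nonneg fun x => abs_nonneg _) ENNReal.toReal_nonneg

/-- The indicator of `Iic c` has bounded variation on any `Icc a b`. -/
lemma bv_indicator_Iic (a b c : ℝ) (hab : a ≤ b) :
    BoundedVariationOn ((Set.Iic c).indicator (1 : ℝ → ℝ)) (Set.Icc a b) := by
  have hmono : MonotoneOn (fun x => -((Set.Iic c).indicator (1 : ℝ → ℝ) x)) (Set.Icc a b) := by
    intro x _ y _ hxy
    simp only [neg_le_neg_iff]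
    by_cases hy : y ∈ Set.Iic c
    · have hx : x ∈ Set.Iic c := le_trans hxy hy
      simp [Set.indicator_of_mem hy, Set.indicator_of_mem hx]
    · simp only [Set.indicator_of_notMem hy]
      by_cases hx : x ∈ Set.Iic c
      · simp [Set.indicator_of_mem hx]
      · simp [Set.indicator_of_notMem hx]
  have hloc := hmono.locallyBoundedVariationOn a b
      (Set.left_mem_Icc.2 hab) (Set.right_mem_Icc.2 hab)
  rw [Set.inter_self] at hloc
  have hveq : eVariationOn (fun x => -((Set.Iic c).indicator (1 : ℝ → ℝ) x)) (Set.Icc a b)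
      = eVariationOn ((Set.Iic c).indicator (1 : ℝ → ℝ)) (Set.Icc a b) := by
    simp only [eVariationOn, edist_neg_neg]
  unfold BoundedVariationOn at hloc ⊢
  rwa [hveq] at hloc

/-- Proposition 6.46: exponential decay of correlations forces ergodicity of the invariant
random measure `μ`: every `T`-invariant measurable set `A ⊆ Ω × [a,b]` has
`μ(A) = ∫ μ_ω(A_ω) dP ∈ {0,1}`. -/
theorem stmt19 {Ω : Type*} [MeasurableSpace Ω] (P : Measure Ω) [IsProbabilityMeasure P]
    (θ : Ω → Ω) (hθ : Ergodic θ P) (hbij : Function.Bijective θ)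
    (a b : ℝ) (hab : a ≤ b)
    (T : Ω → ℝ → ℝ) (hTmeas : ∀ ω, Measurable (T ω))
    (μ : Ω → Measure ℝ) (hprob : ∀ ω, IsProbabilityMeasure (μ ω))
    (hsupp : ∀ ω, μ ω (Set.Icc a b)ᶜ = 0)
    (hmeasμ : ∀ s : Set ℝ, MeasurableSet s → Measurable fun ω => (μ ω s).toReal)
    (hTinv : ∀ ω (s : Set ℝ), MeasurableSet s → μ ω (T ω ⁻¹' s) = μ (θ ω) s)
    (D : Ω → ℝ) (hD : ∀ ω, 0 < D ω) (κ : ℝ) (hκ : κ ∈ Set.Ioo (0 : ℝ) 1)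
    (hdecay : ∀ f : Ω → ℝ → ℝ, (∀ ω, BoundedVariationOn (f ω) (Set.Icc a b)) →
      ∀ g : Ω → ℝ → ℝ, (∀ ω, Integrable (g ω) (μ ω)) →
      ∀ ω (n : ℕ),
        |(∫ x, f ω x * g (θ^[n] ω) (iterT θ T n ω x) ∂μ ω)
            - (∫ x, f ω x ∂μ ω) * (∫ x, g (θ^[n] ω) x ∂μ (θ^[n] ω))|
          ≤ D ω * bvNorm a b (f ω) * (∫ x, |g (θ^[n] ω) x| ∂μ (θ^[n] ω)) * κ ^ n) :
    ∀ A : Set (Ω × ℝ), MeasurableSet A →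
      (∀ ω, T ω ⁻¹' {x | (θ ω, x) ∈ A} = {x | (ω, x) ∈ A}) →
      (∫ ω, (μ ω {x | (ω, x) ∈ A}).toReal ∂P = 0 ∨
        ∫ ω, (μ ω {x | (ω, x) ∈ A}).toReal ∂P = 1) := by
  intro A hA hAinv
  set Aω : Ω → Set ℝ := fun ω => {x | (ω, x) ∈ A} with hAωdef
  have hAωmeas : ∀ ω, MeasurableSet (Aω ω) := fun ω => measurable_prodMk_left hA
  set h : Ω → ℝ := fun ω => (μ ω (Aω ω)).toReal with hhdef
  -- h is θ-invariant
  have hinv : ∀ ω, h (θ ω) = h ω := by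
    intro ω
    have := hTinv ω (Aω (θ ω)) (hAωmeas (θ ω))
    rw [hAinv ω] at this
    simp only [hhdef, ← this]
    rfl
  have hinvn : ∀ (n : ℕ) ω, h (θ^[n] ω) = h ω := by
    intro n
    induction n with
    | zero => intro ω; rfl
    | succ n ih =>
      intro ω
      rw [Function.iterate_succ_apply, ih (θ ω), hinv ω]
  -- iterated invariance of A
  have hiter : ∀ (n : ℕ) ω, iterT θ T n ω ⁻¹' (Aω (θ^[n] ω)) = Aω ω := by
    intro n
    induction n with
    | zero => intro ω; rfl
    | succ n ih =>
      intro ω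
      rw [Function.iterate_succ_apply]
      show (iterT θ T n (θ ω) ∘ T ω) ⁻¹' (Aω (θ^[n] (θ ω))) = Aω ω
      rw [Set.preimage_comp, ih (θ ω), hAinv ω]
  have hμAne : ∀ ω, μ ω (Aω ω) ≠ ⊤ := fun ω => (measure_ne_top (μ ω) _)
  have h0 : ∀ ω, 0 ≤ h ω := fun ω => ENNReal.toReal_nonneg
  have h1 : ∀ ω, h ω ≤ 1 := by
    intro ω
    have : μ ω (Aω ω) ≤ 1 := prob_le_one
    simpa using ENNReal.toReal_mono (by simp) this
  -- the mean-zero observable g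
  set g : Ω → ℝ → ℝ := fun ω x => (Aω ω).indicator 1 x - h ω with hgdef
  have hg_int : ∀ ω, Integrable (g ω) (μ ω) := by
    intro ω
    exact ((integrable_const (1 : ℝ)).indicator (hAωmeas ω)).sub (integrable_const _)
  have hg_mean : ∀ ω, ∫ x, g ω x ∂ μ ω = 0 := by
    intro ω
    simp only [hgdef]
    have hf : Integrable ((Aω ω).indicator (1 : ℝ → ℝ)) (μ ω) :=
      (integrable_const 1).indicator (hAωmeas ω)
    rw [integral_sub hf (integrable_const _), integral_indicator_one (hAωmeas ω), integral_const]
    simp [hhdef, Measure.real]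
  have hg_abs : ∀ ω, ∫ x, |g ω x| ∂ μ ω ≤ 2 := by
    intro ω
    have hb : ∀ x, |g ω x| ≤ 2 := by
      intro x
      have : |g ω x| ≤ |(Aω ω).indicator (1 : ℝ → ℝ) x| + |h ω| := abs_sub _ _
      refine this.trans ?_
      have hi : |(Aω ω).indicator (1 : ℝ → ℝ) x| ≤ 1 := by
        by_cases hx : x ∈ Aω ω <;> simp [Set.indicator_apply, hx]
      have hh1 : |h ω| ≤ 1 := by rw [abs_of_nonneg (h0 ω)]; exact h1 ω
      linarith
    have := integral_mono ((hg_int ω).abs) (integrable_const 2) hb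
    simpa using this
  -- key correlation identity for indicators of Iic c
  have hkey : ∀ ω (c : ℝ),
      (μ ω (Set.Iic c ∩ Aω ω)).toReal = h ω * (μ ω (Set.Iic c)).toReal := by
    intro ω c
    set f : Ω → ℝ → ℝ := fun _ x => (Set.Iic c).indicator 1 x with hfdef
    have hf_bv : ∀ ω', BoundedVariationOn (f ω') (Set.Icc a b) :=
      fun _ => bv_indicator_Iic a b c hab
    set X : ℝ := (μ ω (Set.Iic c ∩ Aω ω)).toReal - h ω * (μ ω (Set.Iic c)).toReal with hXdef
    have hbound : ∀ n : ℕ, |X| ≤ (D ω * bvNorm a b (f ω) * 2) * κ ^ n := by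
      intro n
      have hd := hdecay f hf_bv g hg_int ω n
      -- first integral equals X
      have hI1 : (∫ x, f ω x * g (θ^[n] ω) (iterT θ T n ω x) ∂μ ω) = X := by
        have hpt : ∀ x, f ω x * g (θ^[n] ω) (iterT θ T n ω x)
            = (Set.Iic c ∩ Aω ω).indicator (1 : ℝ → ℝ) x
              - h ω * (Set.Iic c).indicator (1 : ℝ → ℝ) x := by
          intro x
          have hmem : iterT θ T n ω x ∈ Aω (θ^[n] ω) ↔ x ∈ Aω ω := by
            rw [← hiter n ω]; rfl
          have hh' : h (θ^[n] ω) = h ω := hinvn n ω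
          simp only [hfdef, hgdef, hh', Set.indicator_apply, Set.mem_inter_iff, hmem]
          by_cases hx1 : x ∈ Set.Iic c <;> by_cases hx2 : x ∈ Aω ω <;>
            simp [hx1, hx2, hmem, Set.indicator_apply] <;> ring
        rw [integral_congr_ae (Filter.Eventually.of_forall hpt)]
        have hint1 : Integrable ((Set.Iic c ∩ Aω ω).indicator (1 : ℝ → ℝ)) (μ ω) :=
          (integrable_const 1).indicator (measurableSet_Iic.inter (hAωmeas ω))
        have hint2 : Integrable (fun x => h ω * (Set.Iic c).indicator (1 : ℝ → ℝ) x) (μ ω) := by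
          exact ((integrable_const 1).indicator measurableSet_Iic).const_mul _
        rw [integral_sub hint1 hint2, integral_const_mul,
          integral_indicator_one (measurableSet_Iic.inter (hAωmeas ω)),
          integral_indicator_one measurableSet_Iic]
        rfl
      have hI2 : (∫ x, g (θ^[n] ω) x ∂μ (θ^[n] ω)) = 0 := hg_mean _
      rw [hI1, hI2, mul_zero, sub_zero] at hd
      refine hd.trans ?_
      have hκn : (0:ℝ) ≤ κ ^ n := pow_nonneg (le_of_lt hκ.1) n
      have hDbv : (0:ℝ) ≤ D ω * bvNorm a b (f ω) :=
        mul_nonneg (le_of_lt (hD ω)) (bvNorm_nonneg a b _)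
      have := hg_abs (θ^[n] ω)
      nlinarith [mul_nonneg hDbv hκn]
    -- let n → ∞
    have htend : Tendsto (fun n : ℕ => (D ω * bvNorm a b (f ω) * 2) * κ ^ n) atTop (nhds 0) := by
      have := tendsto_pow_atTop_nhds_zero_of_lt_one (le_of_lt hκ.1) hκ.2
      simpa using this.const_mul (D ω * bvNorm a b (f ω) * 2)
    have habs : |X| ≤ 0 := ge_of_tendsto htend (Filter.Eventually.of_forall hbound)
    have : X = 0 := abs_nonpos_iff.1 habs
    rw [hXdef] at this
    linarith
  -- extend to all Borel sets: μ_ω restricted to A_ω equals h ω • μ_ω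
  have hzeroone : ∀ ω, h ω = 0 ∨ h ω = 1 := by
    intro ω
    have hext : (μ ω).restrict (Aω ω) = (ENNReal.ofReal (h ω)) • μ ω := by
      refine Measure.ext_of_Iic _ _ (fun c => ?_)
      rw [Measure.restrict_apply measurableSet_Iic, Measure.smul_apply, smul_eq_mul]
      have hfin1 : μ ω (Set.Iic c ∩ Aω ω) ≠ ⊤ := measure_ne_top _ _
      have hfin2 : ENNReal.ofReal (h ω) * μ ω (Set.Iic c) ≠ ⊤ :=
        ENNReal.mul_ne_top ENNReal.ofReal_ne_top (measure_ne_top _ _)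
      rw [← ENNReal.toReal_eq_toReal_iff' hfin1 hfin2, ENNReal.toReal_mul,
        ENNReal.toReal_ofReal (h0 ω)]
      exact hkey ω c
    have hAapp := congrArg (fun ν : Measure ℝ => ν (Aω ω)) hext
    simp only [Measure.restrict_apply (hAωmeas ω), Set.inter_self, Measure.smul_apply,
      smul_eq_mul] at hAapp
    rw [ENNReal.ofReal_toReal (hμAne ω)] at hAapp
    have hr : h ω = h ω * h ω := by
      have := congrArg ENNReal.toReal hAapp
      rwa [ENNReal.toReal_mul] at this
    have : h ω * (1 - h ω) = 0 := by nlinarith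
    rcases mul_eq_zero.1 this with hz | hz
    · left; exact hz
    · right; linarith
  -- conclude with ergodicity of θ
  by_cases hInt : Integrable h P
  · obtain ⟨cst, hcst⟩ := hθ.ae_eq_const_of_ae_eq_comp_ae hInt.1
      (Filter.EventuallyEq.of_eq (funext hinv))
    have hint : ∫ ω, h ω ∂P = cst := by
      rw [integral_congr_ae hcst]
      simp [Function.const]
    have hPne : (ae P).NeBot := ae_neBot.2 (IsProbabilityMeasure.ne_zero P)
    obtain ⟨ω₀, hω₀⟩ := hcst.exists
    rcases hzeroone ω₀ with hz | ho
    · left; rw [hint]; exact hω₀.symm.trans hz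
    · right; rw [hint]; exact hω₀.symm.trans ho
  · left
    exact integral_undef hInt
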